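/- arXiv:2111.00756 — 4 statements merged into one kernel-verified Lean document; each statement's English description precedes it below -/
import Mathlib

section
/- For all real numbers A > 0, B > 0 and μ ∈ ℝ, the function t ↦ t^{μ−1}·exp(−A t² − B/t²) is integrable on (0,∞), and ∫₀^∞ t^{μ−1} exp(−A t² − B/t²) dt = (1/2)·(B/A)^{μ/4}·∫₀^∞ s^{μ/2−1} exp(−√(AB)·(s + 1/s)) ds, where the integral on the right is also finite. -/
open MeasureTheory Set

/-- Integrability of `s ^ a * exp (-k * (s + 1/s))` on `(0, ∞)` for `k > 0`. -/
lemma aux_integrable (a k : ℝ) (hk : 0 < k) :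
    IntegrableOn (fun s : ℝ => s ^ a * Real.exp (-k * (s + 1 / s))) (Ioi 0) := by
  set m : ℕ := ⌈-a⌉₊ + 1 with hm
  have hma : -1 < a + m := by
    have h := Nat.le_ceil (-a)
    have : (⌈-a⌉₊ : ℝ) ≤ (m : ℝ) := by push_cast [hm]; linarith
    linarith [h.trans this]
  have hdom : IntegrableOn
      (fun s : ℝ => ((Nat.factorial m) : ℝ) / k ^ m * (s ^ (a + m) * Real.exp (-k * s ^ (1 : ℝ))))
      (Ioi 0) :=
    (integrableOn_rpow_mul_exp_neg_mul_rpow hma one_pos hk).const_mul _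
  refine hdom.mono' ?_ ?_
  · apply Measurable.aestronglyMeasurable
    fun_prop
  · filter_upwards [ae_restrict_mem measurableSet_Ioi] with s hs
    have hs0 : (0 : ℝ) < s := hs
    have h1 : Real.exp (-k * (1 / s)) ≤ ((Nat.factorial m) : ℝ) * s ^ m / k ^ m := by
      have h2 : (k / s) ^ m / ((Nat.factorial m) : ℝ) ≤ Real.exp (k / s) :=
        Real.pow_div_factorial_le_exp (k / s) (by positivity) m
      have hpos : (0 : ℝ) < (k / s) ^ m / ((Nat.factorial m) : ℝ) := by positivity
      have h3 : -k * (1 / s) = -(k / s) := by ring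
      rw [h3, Real.exp_neg]
      calc (Real.exp (k / s))⁻¹ ≤ ((k / s) ^ m / ((Nat.factorial m) : ℝ))⁻¹ := by
            exact inv_anti₀ hpos h2
        _ = ((Nat.factorial m) : ℝ) * s ^ m / k ^ m := by
            rw [div_pow]
            field_simp
    calc ‖s ^ a * Real.exp (-k * (s + 1 / s))‖
        = s ^ a * (Real.exp (-k * s) * Real.exp (-k * (1 / s))) := by
          rw [Real.norm_eq_abs, abs_of_nonneg (by positivity), ← Real.exp_add]
          congr 2
          ring
      _ ≤ s ^ a * (Real.exp (-k * s) * (((Nat.factorial m) : ℝ) * s ^ m / k ^ m)) := by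
          have ha' : (0 : ℝ) ≤ s ^ a := by positivity
          gcongr
      _ = ((Nat.factorial m) : ℝ) / k ^ m * (s ^ (a + m) * Real.exp (-k * s ^ (1 : ℝ))) := by
          rw [Real.rpow_add hs0, Real.rpow_natCast, Real.rpow_one]
          ring

theorem statement8 (A B μ : ℝ) (hA : 0 < A) (hB : 0 < B) :
    IntegrableOn (fun t : ℝ => t ^ (μ - 1) * Real.exp (-A * t ^ 2 - B / t ^ 2)) (Ioi 0) ∧
    IntegrableOn
      (fun s : ℝ => s ^ (μ / 2 - 1) * Real.exp (-Real.sqrt (A * B) * (s + 1 / s))) (Ioi 0) ∧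
    ∫ t in Ioi (0 : ℝ), t ^ (μ - 1) * Real.exp (-A * t ^ 2 - B / t ^ 2) =
      (1 / 2) * (B / A) ^ (μ / 4) *
        ∫ s in Ioi (0 : ℝ), s ^ (μ / 2 - 1) * Real.exp (-Real.sqrt (A * B) * (s + 1 / s)) := by
  set k : ℝ := Real.sqrt (A * B) with hkdef
  have hk : 0 < k := Real.sqrt_pos.mpr (by positivity)
  set c : ℝ := Real.sqrt (B / A) with hcdef
  have hc : 0 < c := Real.sqrt_pos.mpr (by positivity)
  -- key algebraic facts
  have hAc : A * c = k := by
    have h1 : (A * c) ^ 2 = k ^ 2 := by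
      rw [mul_pow, hcdef, hkdef, Real.sq_sqrt (by positivity : (0:ℝ) ≤ B / A),
        Real.sq_sqrt (by positivity : (0:ℝ) ≤ A * B)]
      field_simp
    calc A * c = Real.sqrt ((A * c) ^ 2) := (Real.sqrt_sq (by positivity)).symm
      _ = Real.sqrt (k ^ 2) := by rw [h1]
      _ = k := Real.sqrt_sq hk.le
  have hBc : B / c = k := by
    have h1 : (B / c) ^ 2 = k ^ 2 := by
      rw [div_pow, hcdef, hkdef, Real.sq_sqrt (by positivity : (0:ℝ) ≤ B / A),
        Real.sq_sqrt (by positivity : (0:ℝ) ≤ A * B)]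
      field_simp
    calc B / c = Real.sqrt ((B / c) ^ 2) := (Real.sqrt_sq (by positivity)).symm
      _ = Real.sqrt (k ^ 2) := by rw [h1]
      _ = k := Real.sqrt_sq hk.le
  -- the RHS integrand
  set f : ℝ → ℝ := fun s => s ^ (μ / 2 - 1) * Real.exp (-k * (s + 1 / s)) with hfdef
  have hf : IntegrableOn f (Ioi 0) := aux_integrable _ _ hk
  -- the intermediate function
  set F : ℝ → ℝ := fun y => y ^ (μ / 2 - 1) * Real.exp (-A * y - B / y) with hFdef
  -- F(c * s) = c ^ (μ/2 - 1) * f s for s > 0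
  have hFc : ∀ s ∈ Ioi (0 : ℝ), F (c * s) = c ^ (μ / 2 - 1) * f s := by
    intro s hs
    have hs0 : (0 : ℝ) < s := hs
    have e1 : -A * (c * s) - B / (c * s) = -k * (s + 1 / s) := by
      have : B / (c * s) = (B / c) * (1 / s) := by field_simp
      rw [this, hBc]
      have : -A * (c * s) = -(A * c) * s := by ring
      rw [this, hAc]
      ring
    simp only [hFdef, hfdef]
    rw [e1, Real.mul_rpow hc.le hs0.le]
    ring
  have hF : IntegrableOn F (Ioi 0) := by
    have h1 : IntegrableOn (fun s : ℝ => F (c * s)) (Ioi 0) := by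
      refine IntegrableOn.congr_fun (hf.const_mul (c ^ (μ / 2 - 1))) ?_ measurableSet_Ioi
      intro s hs
      exact (hFc s hs).symm
    have := (integrableOn_Ioi_comp_mul_left_iff F 0 hc).mp h1
    rwa [mul_zero] at this
  -- relate the statement's LHS integrand to F via t ↦ t ^ 2
  have hLF : ∀ t ∈ Ioi (0 : ℝ),
      t ^ (μ - 1) * Real.exp (-A * t ^ 2 - B / t ^ 2)
        = (1 / 2) * ((2 : ℝ) * t ^ ((2 : ℝ) - 1) * F (t ^ (2 : ℝ))) := by
    intro t ht
    have ht0 : (0 : ℝ) < t := ht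
    have h2 : t ^ (2 : ℝ) = t ^ 2 := by
      rw [show (2 : ℝ) = ((2 : ℕ) : ℝ) by norm_num, Real.rpow_natCast]
    have h3 : (t ^ (2 : ℝ)) ^ (μ / 2 - 1) = t ^ (μ - 2) := by
      rw [← Real.rpow_mul ht0.le]
      congr 1
      ring
    have h4 : t ^ ((2 : ℝ) - 1) = t := by
      rw [show (2 : ℝ) - 1 = 1 by norm_num, Real.rpow_one]
    have h5 : t * t ^ (μ - 2) = t ^ (μ - 1) := by
      rw [show μ - 1 = 1 + (μ - 2) by ring, Real.rpow_add ht0, Real.rpow_one]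
    simp only [hFdef]
    rw [h3, h4, h2]
    rw [show (1 : ℝ) / 2 * (2 * t * (t ^ (μ - 2) * Real.exp (-A * t ^ 2 - B / t ^ 2)))
        = t * t ^ (μ - 2) * Real.exp (-A * t ^ 2 - B / t ^ 2) by ring, h5]
  -- first conjunct
  have hL : IntegrableOn (fun t : ℝ => t ^ (μ - 1) * Real.exp (-A * t ^ 2 - B / t ^ 2)) (Ioi 0) := by
    have h1 : IntegrableOn (fun t : ℝ => (|(2 : ℝ)| * t ^ ((2 : ℝ) - 1)) • F (t ^ (2 : ℝ)))
        (Ioi 0) := (integrableOn_Ioi_comp_rpow_iff F (two_ne_zero)).mpr hF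
    refine IntegrableOn.congr_fun (h1.const_mul (1 / 2)) ?_ measurableSet_Ioi
    intro t ht
    dsimp only
    rw [hLF t ht, smul_eq_mul, abs_of_nonneg (by norm_num : (0:ℝ) ≤ 2)]
  -- integral computations
  have hIF : (∫ t in Ioi (0 : ℝ), t ^ (μ - 1) * Real.exp (-A * t ^ 2 - B / t ^ 2))
      = (1 / 2) * ∫ y in Ioi (0 : ℝ), F y := by
    rw [← integral_comp_rpow_Ioi F (two_ne_zero), ← integral_const_mul]
    refine setIntegral_congr_fun measurableSet_Ioi ?_
    intro t ht
    dsimp only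
    rw [hLF t ht, smul_eq_mul, abs_of_nonneg (by norm_num : (0:ℝ) ≤ 2)]
  have hIf : (∫ y in Ioi (0 : ℝ), F y) = c ^ (μ / 2) * ∫ s in Ioi (0 : ℝ), f s := by
    have h1 : (∫ s in Ioi (0 : ℝ), F (c * s)) = c⁻¹ • ∫ y in Ioi (c * 0), F y :=
      integral_comp_mul_left_Ioi F 0 hc
    rw [mul_zero] at h1
    have h2 : (∫ s in Ioi (0 : ℝ), F (c * s))
        = c ^ (μ / 2 - 1) * ∫ s in Ioi (0 : ℝ), f s := by
      rw [← integral_const_mul]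
      exact setIntegral_congr_fun measurableSet_Ioi hFc
    rw [h2, smul_eq_mul] at h1
    have h3 : (∫ y in Ioi (0 : ℝ), F y) = c * (c ^ (μ / 2 - 1) * ∫ s in Ioi (0 : ℝ), f s) := by
      rw [h1, ← mul_assoc, mul_inv_cancel₀ hc.ne', one_mul]
    rw [h3, ← mul_assoc]
    congr 1
    have e : c ^ (μ / 2) = c ^ (1 + (μ / 2 - 1)) := by congr 1; ring
    rw [e, Real.rpow_add hc, Real.rpow_one]
  have hcmu : c ^ (μ / 2) = (B / A) ^ (μ / 4) := by
    rw [hcdef, Real.sqrt_eq_rpow, ← Real.rpow_mul (by positivity : (0:ℝ) ≤ B / A)]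
    congr 1
    ring
  refine ⟨hL, hf, ?_⟩
  rw [hIF, hIf, hcmu, mul_assoc]
end

section
/- Let m₀, m₃, μ ∈ ℝ with m₀ ≠ 0 and m₃ < 0, and fix a₂ > 0. For every a₁ > 0 the function t ↦ t^{μ−1}·exp(t²/(64π m₃ a₂²) + 64π³ m₀² m₃ a₁²/t²) is integrable on (0,∞), and for every natural number N, a₁ᴺ · ∫₀^∞ t^{μ−1} exp(t²/(64π m₃ a₂²) + 64π³ m₀² m₃ a₁²/t²) dt tends to 0 as a₁ → ∞. -/
open MeasureTheory Set Filter Real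

private lemma meas_aux (s b₁ b₂ : ℝ) :
    Measurable (fun t : ℝ => t ^ s * Real.exp (-(b₁ * t ^ 2) - b₂ / t ^ 2)) := by
  measurability

private lemma int_aux (s b₁ b₂ : ℝ) (hb₁ : 0 < b₁) (hb₂ : 0 < b₂) :
    IntegrableOn (fun t : ℝ => t ^ s * Real.exp (-(b₁ * t ^ 2) - b₂ / t ^ 2)) (Ioi 0) := by
  have hmeas := meas_aux s b₁ b₂
  rw [← Ioc_union_Ioi_eq_Ioi (zero_le_one (α := ℝ)), integrableOn_union]
  constructor
  · set k : ℕ := ⌈|s|⌉₊ with hk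
    have hks : -(2 * (k : ℝ)) ≤ s := by
      have : |s| ≤ (k : ℝ) := Nat.le_ceil _
      have := abs_le.mp this
      linarith [this.1]
    apply Measure.integrableOn_of_bounded (M := (k.factorial : ℝ) / b₂ ^ k)
    · exact measure_Ioc_lt_top.ne
    · exact hmeas.aestronglyMeasurable
    · filter_upwards [ae_restrict_mem measurableSet_Ioc] with t ht
      obtain ⟨ht0, ht1⟩ := ht
      have h1 : t ^ s ≤ t ^ (-(2 * (k : ℝ))) := rpow_le_rpow_of_exponent_ge ht0 ht1 hks
      have h2 : Real.exp (-(b₁ * t ^ 2) - b₂ / t ^ 2) ≤ Real.exp (-(b₂ / t ^ 2)) := by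
        apply Real.exp_le_exp.mpr
        nlinarith [sq_nonneg t]
      have ht2 : 0 < t ^ 2 := by positivity
      have h3 : (b₂ / t ^ 2) ^ k / k.factorial ≤ Real.exp (b₂ / t ^ 2) :=
        Real.pow_div_factorial_le_exp (x := b₂ / t ^ 2) (by positivity) k
      have h4 : Real.exp (-(b₂ / t ^ 2)) ≤ (k.factorial : ℝ) * t ^ (2 * k) / b₂ ^ k := by
        rw [Real.exp_neg]
        rw [inv_le_comm₀ (Real.exp_pos _) (by positivity)]
        have hfac : ((k.factorial : ℕ) : ℝ) ≠ 0 := Nat.cast_ne_zero.mpr k.factorial_ne_zero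
        have heq : ((k.factorial : ℝ) * t ^ (2 * k) / b₂ ^ k)⁻¹
            = (b₂ / t ^ 2) ^ k / k.factorial := by
          rw [div_pow, pow_mul]
          field_simp
        rw [heq]
        exact h3
      have h5 : t ^ (-(2 * (k : ℝ))) = (t ^ (2 * k) : ℝ)⁻¹ := by
        rw [rpow_neg ht0.le]
        congr 1
        rw [← rpow_natCast t (2 * k)]
        push_cast
        ring_nf
      rw [Real.norm_eq_abs, abs_of_nonneg (by positivity)]
      calc t ^ s * Real.exp (-(b₁ * t ^ 2) - b₂ / t ^ 2)
          ≤ t ^ (-(2 * (k : ℝ))) * ((k.factorial : ℝ) * t ^ (2 * k) / b₂ ^ k) := by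
            apply mul_le_mul h1 (h2.trans h4) (Real.exp_pos _).le (by positivity)
        _ = (k.factorial : ℝ) / b₂ ^ k := by
            rw [h5]
            field_simp
  · set m : ℕ := ⌈|s|⌉₊ with hm
    have hsm : s ≤ (m : ℝ) := le_trans (le_abs_self s) (Nat.le_ceil _)
    apply Integrable.mono' ((integrable_rpow_mul_exp_neg_mul_sq hb₁
      (s := (m : ℝ)) (lt_of_lt_of_le neg_one_lt_zero (Nat.cast_nonneg m))).integrableOn (s := Ioi 1))
    · exact hmeas.aestronglyMeasurable
    · filter_upwards [ae_restrict_mem measurableSet_Ioi] with t ht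
      have ht1 : (1 : ℝ) ≤ t := le_of_lt ht
      have ht0 : 0 < t := lt_of_lt_of_le one_pos ht1
      rw [Real.norm_eq_abs, abs_of_nonneg (by positivity)]
      have h1 : t ^ s ≤ t ^ (m : ℝ) := rpow_le_rpow_of_exponent_le ht1 hsm
      have h2 : Real.exp (-(b₁ * t ^ 2) - b₂ / t ^ 2) ≤ Real.exp (-b₁ * t ^ 2) := by
        apply Real.exp_le_exp.mpr
        have : 0 ≤ b₂ / t ^ 2 := by positivity
        linarith
      exact mul_le_mul h1 h2 (Real.exp_pos _).le (by positivity)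

private lemma exp_arg_bound (b₁ b₂ a t : ℝ) (hb₁ : 0 < b₁) (hb₂ : 0 < b₂)
    (ha : 1 ≤ a) (ht : 0 < t) :
    -(b₁ * t ^ 2) - b₂ * a ^ 2 / t ^ 2 ≤
      -(Real.sqrt (b₁ * b₂) * a) + (-(b₁ / 2 * t ^ 2) - b₂ / 2 / t ^ 2) := by
  have ht2 : (0 : ℝ) < t ^ 2 := by positivity
  have e1 : Real.sqrt b₁ * t * (Real.sqrt b₂ * (a / t)) = Real.sqrt (b₁ * b₂) * a := by
    rw [Real.sqrt_mul hb₁.le]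
    field_simp
  have e2 : (a / t) ^ 2 = a ^ 2 / t ^ 2 := div_pow a t 2
  have key : Real.sqrt (b₁ * b₂) * a ≤ b₁ / 2 * t ^ 2 + b₂ / 2 * (a ^ 2 / t ^ 2) := by
    nlinarith [sq_nonneg (Real.sqrt b₁ * t - Real.sqrt b₂ * (a / t)),
      Real.sq_sqrt hb₁.le, Real.sq_sqrt hb₂.le, e1, e2]
  have h6 : b₂ / 2 / t ^ 2 ≤ b₂ / 2 * a ^ 2 / t ^ 2 := by
    have ha2 : (1 : ℝ) ≤ a ^ 2 := by nlinarith
    have hp : (0 : ℝ) < b₂ / 2 / t ^ 2 := by positivity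
    calc b₂ / 2 / t ^ 2 = b₂ / 2 / t ^ 2 * 1 := by ring
      _ ≤ b₂ / 2 / t ^ 2 * a ^ 2 := by nlinarith
      _ = b₂ / 2 * a ^ 2 / t ^ 2 := by ring
  have h7 : b₂ / 2 * (a ^ 2 / t ^ 2) = b₂ / 2 * a ^ 2 / t ^ 2 := by ring
  have h8 : b₂ * a ^ 2 / t ^ 2 = 2 * (b₂ / 2 * a ^ 2 / t ^ 2) := by ring
  linarith [key, h6, h7, h8]

theorem statement10 (m₀ m₃ μ : ℝ) (hm₀ : m₀ ≠ 0) (hm₃ : m₃ < 0)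
    (a₂ : ℝ) (ha₂ : 0 < a₂) :
    (∀ a₁ : ℝ, 0 < a₁ →
      IntegrableOn
        (fun t : ℝ => t ^ (μ - 1) *
          Real.exp (t ^ 2 / (64 * π * m₃ * a₂ ^ 2) + 64 * π ^ 3 * m₀ ^ 2 * m₃ * a₁ ^ 2 / t ^ 2))
        (Ioi 0)) ∧
    ∀ N : ℕ, Tendsto
      (fun a₁ : ℝ => a₁ ^ N *
        ∫ t in Ioi (0 : ℝ), t ^ (μ - 1) *
          Real.exp (t ^ 2 / (64 * π * m₃ * a₂ ^ 2) + 64 * π ^ 3 * m₀ ^ 2 * m₃ * a₁ ^ 2 / t ^ 2))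
      atTop (nhds 0) := by
  have hπ := Real.pi_pos
  have hm₀2 : 0 < m₀ ^ 2 := lt_of_le_of_ne (sq_nonneg m₀) (Ne.symm (pow_ne_zero 2 hm₀))
  set D : ℝ := 64 * π * m₃ * a₂ ^ 2 with hD
  have hDneg : D < 0 := by
    have h1 : 0 < 64 * π * a₂ ^ 2 := by positivity
    nlinarith
  have hDne : D ≠ 0 := ne_of_lt hDneg
  set b₁ : ℝ := -D⁻¹ with hb₁def
  have hb₁ : 0 < b₁ := neg_pos.mpr (inv_lt_zero.mpr hDneg)
  set b₂ : ℝ := -(64 * π ^ 3 * m₀ ^ 2 * m₃) with hb₂def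
  have hb₂ : 0 < b₂ := by
    have h1 : 0 < 64 * π ^ 3 * m₀ ^ 2 := by positivity
    rw [hb₂def]; nlinarith
  -- pointwise identification of the integrand
  have heq : ∀ a₁ : ℝ, EqOn
      (fun t : ℝ => t ^ (μ - 1) *
        Real.exp (t ^ 2 / D + 64 * π ^ 3 * m₀ ^ 2 * m₃ * a₁ ^ 2 / t ^ 2))
      (fun t : ℝ => t ^ (μ - 1) * Real.exp (-(b₁ * t ^ 2) - b₂ * a₁ ^ 2 / t ^ 2))
      (Ioi 0) := by
    intro a₁ t ht
    have htne : t ≠ 0 := ne_of_gt ht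
    have : t ^ 2 / D + 64 * π ^ 3 * m₀ ^ 2 * m₃ * a₁ ^ 2 / t ^ 2
        = -(b₁ * t ^ 2) - b₂ * a₁ ^ 2 / t ^ 2 := by
      rw [hb₁def, hb₂def]
      field_simp
      ring
    simp only [this]
  have hint : ∀ a₁ : ℝ, 0 < a₁ →
      IntegrableOn
        (fun t : ℝ => t ^ (μ - 1) *
          Real.exp (t ^ 2 / D + 64 * π ^ 3 * m₀ ^ 2 * m₃ * a₁ ^ 2 / t ^ 2)) (Ioi 0) := by
    intro a₁ ha₁
    have h := int_aux (μ - 1) b₁ (b₂ * a₁ ^ 2) hb₁ (by positivity)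
    have h' : IntegrableOn
        (fun t : ℝ => t ^ (μ - 1) * Real.exp (-(b₁ * t ^ 2) - b₂ * a₁ ^ 2 / t ^ 2)) (Ioi 0) := h
    exact h'.congr_fun (fun t ht => ((heq a₁) ht).symm) measurableSet_Ioi
  refine ⟨hint, fun N => ?_⟩
  set ε : ℝ := Real.sqrt (b₁ * b₂) with hεdef
  have hε : 0 < ε := Real.sqrt_pos.mpr (mul_pos hb₁ hb₂)
  set g : ℝ → ℝ := fun t => t ^ (μ - 1) * Real.exp (-(b₁ / 2 * t ^ 2) - b₂ / 2 / t ^ 2) with hg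
  have hgint : IntegrableOn g (Ioi 0) := int_aux (μ - 1) (b₁ / 2) (b₂ / 2) (by positivity) (by positivity)
  set C : ℝ := ∫ t in Ioi (0 : ℝ), g t with hC
  have hCnn : 0 ≤ C := setIntegral_nonneg measurableSet_Ioi (fun t ht =>
    mul_nonneg (Real.rpow_nonneg (le_of_lt ht) _) (Real.exp_pos _).le)
  -- upper bound for a₁ ≥ 1
  have hub : ∀ a₁ : ℝ, 1 ≤ a₁ →
      (a₁ ^ N * ∫ t in Ioi (0 : ℝ), t ^ (μ - 1) *
        Real.exp (t ^ 2 / D + 64 * π ^ 3 * m₀ ^ 2 * m₃ * a₁ ^ 2 / t ^ 2))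
      ≤ C * (a₁ ^ N * Real.exp (-(ε * a₁))) := by
    intro a₁ ha₁
    have ha₁0 : 0 < a₁ := lt_of_lt_of_le one_pos ha₁
    have hIeq : (∫ t in Ioi (0 : ℝ), t ^ (μ - 1) *
          Real.exp (t ^ 2 / D + 64 * π ^ 3 * m₀ ^ 2 * m₃ * a₁ ^ 2 / t ^ 2))
        = ∫ t in Ioi (0 : ℝ), t ^ (μ - 1) * Real.exp (-(b₁ * t ^ 2) - b₂ * a₁ ^ 2 / t ^ 2) :=
      setIntegral_congr_fun measurableSet_Ioi (heq a₁)
    have hf_int : IntegrableOn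
        (fun t : ℝ => t ^ (μ - 1) * Real.exp (-(b₁ * t ^ 2) - b₂ * a₁ ^ 2 / t ^ 2)) (Ioi 0) :=
      int_aux (μ - 1) b₁ (b₂ * a₁ ^ 2) hb₁ (by positivity)
    have hImono : (∫ t in Ioi (0 : ℝ), t ^ (μ - 1) *
          Real.exp (-(b₁ * t ^ 2) - b₂ * a₁ ^ 2 / t ^ 2))
        ≤ ∫ t in Ioi (0 : ℝ), Real.exp (-(ε * a₁)) * g t := by
      apply setIntegral_mono_on hf_int (hgint.const_mul _) measurableSet_Ioi
      intro t ht
      have ht0 : (0 : ℝ) < t := ht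
      have harg := exp_arg_bound b₁ b₂ a₁ t hb₁ hb₂ ha₁ ht0
      calc t ^ (μ - 1) * Real.exp (-(b₁ * t ^ 2) - b₂ * a₁ ^ 2 / t ^ 2)
          ≤ t ^ (μ - 1) * Real.exp (-(ε * a₁) + (-(b₁ / 2 * t ^ 2) - b₂ / 2 / t ^ 2)) := by
            apply mul_le_mul_of_nonneg_left _ (Real.rpow_nonneg ht0.le _)
            exact Real.exp_le_exp.mpr harg
        _ = Real.exp (-(ε * a₁)) * g t := by
            rw [Real.exp_add, hg]
            ring
    have hIC : (∫ t in Ioi (0 : ℝ), Real.exp (-(ε * a₁)) * g t)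
        = Real.exp (-(ε * a₁)) * C := by
      rw [hC, MeasureTheory.integral_const_mul]
    have hpow : (0 : ℝ) ≤ a₁ ^ N := by positivity
    rw [hIeq]
    calc a₁ ^ N * ∫ t in Ioi (0 : ℝ), t ^ (μ - 1) *
          Real.exp (-(b₁ * t ^ 2) - b₂ * a₁ ^ 2 / t ^ 2)
        ≤ a₁ ^ N * (Real.exp (-(ε * a₁)) * C) := by
          apply mul_le_mul_of_nonneg_left _ hpow
          rw [← hIC]; exact hImono
      _ = C * (a₁ ^ N * Real.exp (-(ε * a₁))) := by ring
  -- lower bound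
  have hlb : ∀ a₁ : ℝ, 1 ≤ a₁ →
      0 ≤ a₁ ^ N * ∫ t in Ioi (0 : ℝ), t ^ (μ - 1) *
        Real.exp (t ^ 2 / D + 64 * π ^ 3 * m₀ ^ 2 * m₃ * a₁ ^ 2 / t ^ 2) := by
    intro a₁ ha₁
    have ha₁0 : 0 < a₁ := lt_of_lt_of_le one_pos ha₁
    apply mul_nonneg (by positivity)
    apply setIntegral_nonneg measurableSet_Ioi
    intro t ht
    exact mul_nonneg (Real.rpow_nonneg (le_of_lt ht) _) (Real.exp_pos _).le
  -- the RHS tends to 0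
  have hR : Tendsto (fun a₁ : ℝ => C * (a₁ ^ N * Real.exp (-(ε * a₁)))) atTop (nhds 0) := by
    have h1 : Tendsto (fun x : ℝ => (ε * x) ^ N * Real.exp (-(ε * x))) atTop (nhds 0) :=
      (tendsto_pow_mul_exp_neg_atTop_nhds_zero N).comp
        ((tendsto_const_mul_atTop_of_pos hε).mpr tendsto_id)
    have h2 : (fun a₁ : ℝ => a₁ ^ N * Real.exp (-(ε * a₁)))
        = fun a₁ : ℝ => (ε⁻¹) ^ N * ((ε * a₁) ^ N * Real.exp (-(ε * a₁))) := by
      funext a₁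
      rw [mul_pow]
      field_simp
      ring
      rw [mul_assoc, ← mul_pow, mul_inv_cancel₀ hε.ne', one_pow, mul_one]
    have h3 : Tendsto (fun a₁ : ℝ => a₁ ^ N * Real.exp (-(ε * a₁))) atTop (nhds 0) := by
      rw [h2]
      simpa using h1.const_mul ((ε⁻¹) ^ N)
    simpa using h3.const_mul C
  apply tendsto_of_tendsto_of_tendsto_of_le_of_le' tendsto_const_nhds hR
  · filter_upwards [eventually_ge_atTop (1 : ℝ)] with a₁ ha₁ using hlb a₁ ha₁
  · filter_upwards [eventually_ge_atTop (1 : ℝ)] with a₁ ha₁ using hub a₁ ha₁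
end

section
/- Let λ₁,…,λ_r ∈ ℂ be pairwise distinct and let c₁,…,c_r ∈ ℂ be not all zero. Define f : (0,∞) → ℂ by f(y) := Σᵢ cᵢ·y^{λᵢ}, where y^{λ} := exp(λ·log y). Then f is not rapidly decreasing at infinity: it is not the case that for every natural number N, yᴺ·f(y) → 0 as y → ∞. -/
open Filter

/-- Key lemma: a nontrivial exponential sum with distinct exponents of positive real
part cannot tend to zero at infinity. -/
lemma key_exp_sum : ∀ (r : ℕ) (μ : Fin r → ℂ), Function.Injective μ →
    (∀ i, 0 < (μ i).re) → ∀ c : Fin r → ℂ,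
    Tendsto (fun t : ℝ => ∑ i, c i * Complex.exp (μ i * t)) atTop (nhds 0) →
    ∀ i, c i = 0 := by
  intro r
  induction r with
  | zero => exact fun μ _ _ c _ i => i.elim0
  | succ r ih =>
    intro μ hμ hre c h
    have step : ∀ s : ℝ, ∀ i : Fin r,
        c i.castSucc * (Complex.exp (μ i.castSucc * s) - Complex.exp (μ (Fin.last r) * s)) = 0 := by
      intro s
      apply ih (fun i => μ i.castSucc)
        (hμ.comp (Fin.castSucc_injective r))
        (fun i => hre i.castSucc)
      have h1 : Tendsto (fun t : ℝ => ∑ i, c i * Complex.exp (μ i * (↑(t + s) : ℂ)))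
          atTop (nhds 0) := h.comp (tendsto_atTop_add_const_right atTop s tendsto_id)
      have h2 := h1.sub (h.const_mul (Complex.exp (μ (Fin.last r) * s)))
      rw [mul_zero, sub_zero] at h2
      convert h2 using 2 with t
      simp only [Fin.sum_univ_castSucc, Finset.mul_sum]
      push_cast
      simp only [mul_add, Complex.exp_add, mul_sub, sub_mul, Finset.mul_sum,
        Finset.sum_sub_distrib]
      ring_nf
      congr 1 <;> exact Finset.sum_congr rfl fun i _ => by ring
    -- choose good s for each i to kill the first r coefficients
    have hz : ∀ i : Fin r, c i.castSucc = 0 := by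
      intro i
      set a := μ i.castSucc
      set b := μ (Fin.last r)
      have hab : a ≠ b := fun hEq => by
        have := hμ hEq
        exact absurd this (by simp [Fin.ext_iff, i.2.ne])
      have hd : a - b ≠ 0 := sub_ne_zero.mpr hab
      set s : ℝ := Real.pi / ‖a - b‖ with hs
      have hne : Complex.exp (a * s) ≠ Complex.exp (b * s) := by
        intro hEq
        have h1 : Complex.exp ((a - b) * s) = 1 := by
          rw [sub_mul, Complex.exp_sub, hEq, div_self (Complex.exp_ne_zero _)]
        rw [Complex.exp_eq_one_iff] at h1
        obtain ⟨n, hn⟩ := h1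
        have habs : ‖a - b‖ ≠ 0 := norm_ne_zero_iff.mpr hd
        have hnorm : ‖(a - b) * (s : ℂ)‖ = Real.pi := by
          rw [norm_mul, Complex.norm_real, hs, Real.norm_eq_abs,
            abs_of_pos (div_pos Real.pi_pos (norm_pos_iff.mpr hd))]
          have habs' : ‖a - b‖ ≠ 0 := by
            simpa using habs
          rw [mul_comm]
          exact div_mul_cancel₀ _ habs
        rw [hn] at hnorm
        have h2 : ‖(n : ℂ) * (2 * Real.pi * Complex.I)‖ = |(n : ℝ)| * (2 * Real.pi) := by
          simp [norm_mul, abs_of_pos Real.pi_pos, mul_assoc]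
        rw [h2] at hnorm
        rcases eq_or_ne n 0 with h0 | h0
        · rw [h0] at hnorm; simp at hnorm; linarith [Real.pi_pos]
        · have : (1 : ℝ) ≤ |(n : ℝ)| := by
            rw [← Int.cast_abs]
            exact_mod_cast Int.one_le_abs (by omega)
          nlinarith [Real.pi_pos]
      have := step s i
      rcases mul_eq_zero.mp this with h | h
      · exact h
      · exact absurd (sub_eq_zero.mp h) hne
    -- now the sum reduces to the last term
    have hlast : Tendsto
        (fun t : ℝ => c (Fin.last r) * Complex.exp (μ (Fin.last r) * t)) atTop (nhds 0) := by
      have : (fun t : ℝ => ∑ i, c i * Complex.exp (μ i * t)) =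
          fun t : ℝ => c (Fin.last r) * Complex.exp (μ (Fin.last r) * t) := by
        funext t
        rw [Fin.sum_univ_castSucc]
        simp [hz]
      rwa [this] at h
    have hclast : c (Fin.last r) = 0 := by
      by_contra hc0
      have hnorm : Tendsto
          (fun t : ℝ => ‖c (Fin.last r)‖ * Real.exp ((μ (Fin.last r)).re * t))
          atTop (nhds 0) := by
        have h3 := hlast.norm
        rw [norm_zero] at h3
        simp only [norm_mul, Complex.norm_exp] at h3
        have h4 : ∀ t : ℝ, ((μ (Fin.last r)) * (t : ℂ)).re = (μ (Fin.last r)).re * t := by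
          intro t; simp [Complex.mul_re]
        simpa only [h4] using h3
      have hge : ∀ᶠ t : ℝ in atTop, ‖c (Fin.last r)‖ ≤
          ‖c (Fin.last r)‖ * Real.exp ((μ (Fin.last r)).re * t) := by
        filter_upwards [eventually_ge_atTop (0 : ℝ)] with t ht
        nlinarith [Real.one_le_exp (mul_nonneg (hre (Fin.last r)).le ht),
          norm_nonneg (c (Fin.last r))]
      have := ge_of_tendsto hnorm hge
      exact hc0 (norm_le_zero_iff.mp this)
    intro i
    rcases Fin.eq_castSucc_or_eq_last i with ⟨j, rfl⟩ | rfl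
    · exact hz j
    · exact hclast

theorem statement14 (r : ℕ) (lam : Fin r → ℂ) (hlam : Function.Injective lam)
    (c : Fin r → ℂ) (hc : c ≠ 0) :
    ¬ ∀ N : ℕ, Tendsto
        (fun y : ℝ => (y : ℂ) ^ N * ∑ i, c i * Complex.exp (lam i * Real.log y))
        atTop (nhds 0) := by
  intro H
  obtain ⟨i0, hi0⟩ := Function.ne_iff.mp hc
  -- choose N large enough
  obtain ⟨B, hB⟩ := (Set.finite_range fun i => -(lam i).re).bddAbove
  set N : ℕ := ⌈B⌉₊ + 1 with hN
  have hNre : ∀ i, 0 < (lam i + N).re := by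
    intro i
    have h1 : -(lam i).re ≤ B := hB ⟨i, rfl⟩
    have h2 : B ≤ ⌈B⌉₊ := by
      rcases le_or_gt B 0 with h | h
      · exact h.trans (by positivity)
      · exact Nat.le_ceil B
    simp only [Complex.add_re, Complex.natCast_re]
    have : (N : ℝ) = ⌈B⌉₊ + 1 := by exact_mod_cast rfl
    rw [this]; linarith
  -- transform the hypothesis via y = exp t
  have h1 : Tendsto
      (fun t : ℝ => ∑ i, c i * Complex.exp ((lam i + N) * t)) atTop (nhds 0) := by
    have h2 := (H N).comp Real.tendsto_exp_atTop
    convert h2 using 2 with t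
    simp only [Function.comp, Real.log_exp, Complex.ofReal_exp, Finset.mul_sum]
    rw [← Complex.exp_nat_mul]
    congr 1 with i
    rw [add_mul, Complex.exp_add]
    ring
  have := key_exp_sum r (fun i => lam i + N)
    (fun a b hab => hlam (by simpa using hab)) hNre c h1 i0
  exact hi0 this
end

section
/- Let m ∈ ℤ∖{0} and α ∈ ℤ with 1 ≤ α ≤ 2|m| and 4m ∣ α², and set γ := n(α/(2m),0,0,0). Let N_S(ℤ) := {n(0,u₁,u₂,u₃) : u₁,u₂,u₃ ∈ ℤ}, Z_J(ℤ) := {n(0,u₁,0,0) : u₁ ∈ ℤ}, and V_J := {n(0,0,u₂,u₃) : u₂,u₃ ∈ ℝ}. Then the set H := {z·w : z ∈ Z_J(ℤ), w ∈ γ⁻¹·V_J·γ with all matrix entries of w in ℤ} is a subgroup of the abelian group N_S(ℤ), and H has finite index in N_S(ℤ). -/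
open Matrix

noncomputable section

/-- `n(u₀,u₁,u₂,u₃) = S(u₁,u₂,u₃) · L(u₀)`. -/
def nMat (u₀ u₁ u₂ u₃ : ℝ) : Matrix (Fin 4) (Fin 4) ℝ :=
  !![1,0,u₁,u₂; 0,1,u₂,u₃; 0,0,1,0; 0,0,0,1] *
  !![1,u₀,0,0; 0,1,0,0; 0,0,1,0; 0,0,-u₀,1]

/-- `N_S(ℤ) = {n(0,u₁,u₂,u₃) : u₁,u₂,u₃ ∈ ℤ}`. -/
def NSZ : Set (Matrix (Fin 4) (Fin 4) ℝ) :=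
  {x | ∃ u₁ u₂ u₃ : ℤ, x = nMat 0 u₁ u₂ u₃}

/-- `Z_J(ℤ) = {n(0,u₁,0,0) : u₁ ∈ ℤ}`. -/
def ZJZ : Set (Matrix (Fin 4) (Fin 4) ℝ) :=
  {x | ∃ u₁ : ℤ, x = nMat 0 u₁ 0 0}

/-- `V_J = {n(0,0,u₂,u₃) : u₂,u₃ ∈ ℝ}`. -/
def VJ : Set (Matrix (Fin 4) (Fin 4) ℝ) :=
  {x | ∃ u₂ u₃ : ℝ, x = nMat 0 0 u₂ u₃}

/-- `γ = n(α/(2m),0,0,0)`. -/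
def gammaMat (m α : ℤ) : Matrix (Fin 4) (Fin 4) ℝ :=
  nMat ((α : ℝ) / (2 * (m : ℝ))) 0 0 0

/-- `H = {z·w : z ∈ Z_J(ℤ), w ∈ γ⁻¹·V_J·γ with all entries of w integers}`. -/
def Hset (m α : ℤ) : Set (Matrix (Fin 4) (Fin 4) ℝ) :=
  {x | ∃ z ∈ ZJZ, ∃ w : Matrix (Fin 4) (Fin 4) ℝ,
    (∃ v ∈ VJ, w = (gammaMat m α)⁻¹ * v * gammaMat m α) ∧
    (∀ i j : Fin 4, ∃ q : ℤ, w i j = (q : ℝ)) ∧ x = z * w}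

lemma nMat_eq (u₀ u₁ u₂ u₃ : ℝ) :
    nMat u₀ u₁ u₂ u₃ = !![1,u₀,u₁-u₀*u₂,u₂; 0,1,u₂-u₀*u₃,u₃; 0,0,1,0; 0,0,-u₀,1] := by
  ext i j
  fin_cases i <;> fin_cases j <;>
    simp [nMat, Matrix.mul_apply, Fin.sum_univ_four, Matrix.vecHead, Matrix.vecTail] <;> ring

lemma nMat_one : nMat 0 0 0 0 = 1 := by
  ext i j
  fin_cases i <;> fin_cases j <;>
    simp [nMat_eq, Matrix.one_apply] <;> rfl

lemma nMat_mul (a b c d e f : ℝ) :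
    nMat 0 a b c * nMat 0 d e f = nMat 0 (a+d) (b+e) (c+f) := by
  simp only [nMat_eq]
  ext i j
  fin_cases i <;> fin_cases j <;>
    simp [Matrix.mul_apply, Fin.sum_univ_four, Matrix.vecHead, Matrix.vecTail] <;> ring

lemma nMat_L_mul (a b : ℝ) :
    nMat a 0 0 0 * nMat b 0 0 0 = nMat (a+b) 0 0 0 := by
  simp only [nMat_eq]
  ext i j
  fin_cases i <;> fin_cases j <;>
    simp [Matrix.mul_apply, Fin.sum_univ_four, Matrix.vecHead, Matrix.vecTail] <;> ring

lemma nMat_conj (c u₂ u₃ : ℝ) :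
    nMat (-c) 0 0 0 * nMat 0 0 u₂ u₃ * nMat c 0 0 0 =
      nMat 0 (c^2*u₃ - 2*c*u₂) (u₂ - c*u₃) u₃ := by
  simp only [nMat_eq]
  ext i j
  fin_cases i <;> fin_cases j <;>
    simp [Matrix.mul_apply, Fin.sum_univ_four, Matrix.vecHead, Matrix.vecTail] <;> ring

lemma nMat_inv_L (c : ℝ) : (nMat c 0 0 0)⁻¹ = nMat (-c) 0 0 0 := by
  apply Matrix.inv_eq_right_inv
  rw [nMat_L_mul]; simp [nMat_one]

lemma nMat_congr {A B C A' B' C' : ℝ} (h1 : A = A') (h2 : B = B') (h3 : C = C') :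
    nMat 0 A B C = nMat 0 A' B' C' := by rw [h1, h2, h3]

lemma key_id (m α k : ℝ) (hm : m ≠ 0) (hk : α^2 = 4*m*k) (a b : ℝ) :
    (α/(2*m))^2*b - 2*(α/(2*m))*(a + (α/(2*m))*b) = (-(α*a + k*b))/m := by
  field_simp
  ring_nf
  linear_combination (-b) * hk

lemma nMat_app02 (A B C : ℝ) : nMat 0 A B C 0 2 = A := by simp [nMat_eq]
lemma nMat_app03 (A B C : ℝ) : nMat 0 A B C 0 3 = B := by simp [nMat_eq]
lemma nMat_app13 (A B C : ℝ) : nMat 0 A B C 1 3 = C := by simp [nMat_eq]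

lemma nMat_entries_int (t a b : ℤ) :
    ∀ i j : Fin 4, ∃ q : ℤ, nMat 0 (t:ℝ) (a:ℝ) (b:ℝ) i j = (q : ℝ) := by
  intro i j
  fin_cases i <;> fin_cases j <;>
    simp [nMat_eq] <;>
    first
      | exact ⟨_, rfl⟩
      | exact ⟨1, Int.cast_one.symm⟩
      | exact ⟨0, Int.cast_zero.symm⟩

lemma mem_Hset_iff (m α k : ℤ) (hm : m ≠ 0) (hk : α^2 = 4*m*k)
    (x : Matrix (Fin 4) (Fin 4) ℝ) :
    x ∈ Hset m α ↔ ∃ s a b : ℤ, (m ∣ α*a + k*b) ∧ x = nMat 0 s a b := by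
  have hm' : (m:ℝ) ≠ 0 := Int.cast_ne_zero.mpr hm
  have hkR : ((α:ℝ))^2 = 4*(m:ℝ)*(k:ℝ) := by exact_mod_cast hk
  set c : ℝ := (α:ℝ)/(2*(m:ℝ)) with hc
  have hγ : gammaMat m α = nMat c 0 0 0 := rfl
  have hγi : (gammaMat m α)⁻¹ = nMat (-c) 0 0 0 := by rw [hγ, nMat_inv_L]
  constructor
  · rintro ⟨z, ⟨u₁, rfl⟩, w, ⟨v, ⟨p, q, rfl⟩, rfl⟩, hint, rfl⟩
    have hw : (gammaMat m α)⁻¹ * nMat 0 0 p q * gammaMat m α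
        = nMat 0 ((-((α:ℝ)*(p - c*q) + (k:ℝ)*q))/(m:ℝ)) (p - c*q) q := by
      rw [hγi, hγ, nMat_conj]
      refine nMat_congr ?_ rfl rfl
      have h := key_id (m:ℝ) (α:ℝ) (k:ℝ) hm' hkR (p - c*q) q
      calc c^2*q - 2*c*p = c^2*q - 2*c*((p - c*q) + c*q) := by ring
        _ = _ := h
    obtain ⟨q₁, h1⟩ := hint 0 2
    obtain ⟨q₂, h2⟩ := hint 0 3
    obtain ⟨q₃, h3⟩ := hint 1 3
    rw [hw, nMat_app02] at h1
    rw [hw, nMat_app03] at h2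
    rw [hw, nMat_app13] at h3
    have hdvd' : m ∣ α*q₂ + k*q₃ := by
      refine ⟨-q₁, ?_⟩
      have hr : ((α:ℝ)*q₂ + (k:ℝ)*q₃) = (m:ℝ)*(-(q₁:ℝ)) := by
        rw [← h2, ← h3]
        field_simp at h1
        linarith
      exact_mod_cast hr
    refine ⟨u₁ + q₁, q₂, q₃, hdvd', ?_⟩
    rw [hw, nMat_congr h1 h2 h3, nMat_mul]
    exact nMat_congr (by push_cast; ring) (by push_cast; ring) (by push_cast; ring)
  · rintro ⟨s, a, b, ⟨j, hj⟩, rfl⟩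
    refine ⟨nMat 0 ((s + j : ℤ) : ℝ) 0 0, ⟨s + j, rfl⟩,
      nMat 0 ((-j : ℤ) : ℝ) (a : ℝ) (b : ℝ), ⟨nMat 0 0 ((a:ℝ) + c*(b:ℝ)) (b:ℝ),
        ⟨(a:ℝ) + c*(b:ℝ), (b:ℝ), rfl⟩, ?_⟩, nMat_entries_int _ _ _, ?_⟩
    · rw [hγi, hγ, nMat_conj]
      refine nMat_congr ?_ (by ring) rfl |>.symm
      have h := key_id (m:ℝ) (α:ℝ) (k:ℝ) hm' hkR (a:ℝ) (b:ℝ)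
      have hjR : (α:ℝ)*(a:ℝ) + (k:ℝ)*(b:ℝ) = (m:ℝ)*(j:ℝ) := by exact_mod_cast hj
      calc c^2*(b:ℝ) - 2*c*((a:ℝ) + c*(b:ℝ)) = (-( (α:ℝ)*a + (k:ℝ)*b))/(m:ℝ) := h
        _ = ((-j : ℤ) : ℝ) := by rw [hjR]; push_cast; field_simp
    · rw [nMat_mul]
      exact nMat_congr (by push_cast; ring) (by push_cast; ring) (by push_cast; ring)

theorem statement15 (m α : ℤ) (hm : m ≠ 0) (hα1 : 1 ≤ α) (hα2 : α ≤ 2 * |m|)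
    (hdvd : (4 * m) ∣ α ^ 2) :
    Hset m α ⊆ NSZ ∧
    (1 : Matrix (Fin 4) (Fin 4) ℝ) ∈ Hset m α ∧
    (∀ x ∈ Hset m α, ∀ y ∈ Hset m α, x * y ∈ Hset m α) ∧
    (∀ x ∈ Hset m α, x⁻¹ ∈ Hset m α) ∧
    ∃ T : Finset (Matrix (Fin 4) (Fin 4) ℝ), (T : Set (Matrix (Fin 4) (Fin 4) ℝ)) ⊆ NSZ ∧
      ∀ x ∈ NSZ, ∃ t ∈ T, ∃ h ∈ Hset m α, x = t * h := by
  obtain ⟨k, hk⟩ := hdvd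
  have hch := mem_Hset_iff m α k hm hk
  refine ⟨?_, ?_, ?_, ?_, ?_⟩
  · intro x hx
    obtain ⟨s, a, b, _, rfl⟩ := (hch x).1 hx
    exact ⟨s, a, b, rfl⟩
  · exact (hch 1).2 ⟨0, 0, 0, by simp, by rw [← nMat_one]; norm_num⟩
  · intro x hx y hy
    obtain ⟨s, a, b, hd, rfl⟩ := (hch x).1 hx
    obtain ⟨s', a', b', hd', rfl⟩ := (hch y).1 hy
    refine (hch _).2 ⟨s + s', a + a', b + b', ?_, ?_⟩
    · have : α*(a+a') + k*(b+b') = (α*a + k*b) + (α*a' + k*b') := by ring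
      rw [this]; exact dvd_add hd hd'
    · rw [nMat_mul]
      exact nMat_congr (by push_cast; ring) (by push_cast; ring) (by push_cast; ring)
  · intro x hx
    obtain ⟨s, a, b, hd, rfl⟩ := (hch x).1 hx
    have hinv : (nMat 0 (s:ℝ) (a:ℝ) (b:ℝ))⁻¹ = nMat 0 (-(s:ℝ)) (-(a:ℝ)) (-(b:ℝ)) := by
      apply Matrix.inv_eq_right_inv
      rw [nMat_mul, show ((s:ℝ) + -(s:ℝ)) = 0 by ring, show ((a:ℝ) + -(a:ℝ)) = 0 by ring,
        show ((b:ℝ) + -(b:ℝ)) = 0 by ring, nMat_one]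
    refine (hch _).2 ⟨-s, -a, -b, ?_, ?_⟩
    · have : α*(-a) + k*(-b) = -(α*a + k*b) := by ring
      rw [this]; exact hd.neg_right
    · rw [hinv]
      exact nMat_congr (by push_cast; ring) (by push_cast; ring) (by push_cast; ring)
  · refine ⟨((Finset.Ico (0:ℤ) |m|) ×ˢ (Finset.Ico (0:ℤ) |m|)).image
      (fun p : ℤ × ℤ => nMat 0 0 (p.1:ℝ) (p.2:ℝ)), ?_, ?_⟩
    · intro x hx
      simp only [Finset.coe_image, Set.mem_image, Finset.mem_coe] at hx
      obtain ⟨⟨r₂, r₃⟩, -, rfl⟩ := hx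
      exact ⟨0, r₂, r₃, by norm_num⟩
    · rintro x ⟨u₁, u₂, u₃, rfl⟩
      have hmp : (0:ℤ) < |m| := abs_pos.mpr hm
      set r₂ := u₂ % |m| with hr₂
      set r₃ := u₃ % |m| with hr₃
      refine ⟨nMat 0 0 (r₂:ℝ) (r₃:ℝ), ?_, nMat 0 (u₁:ℝ) ((u₂ - r₂ : ℤ):ℝ) ((u₃ - r₃ : ℤ):ℝ),
        ?_, ?_⟩
      · refine Finset.mem_image.mpr ⟨(r₂, r₃), ?_, rfl⟩
        refine Finset.mem_product.mpr ⟨?_, ?_⟩ <;>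
          exact Finset.mem_Ico.mpr ⟨Int.emod_nonneg _ (abs_ne_zero.mpr hm),
            Int.emod_lt_of_pos _ hmp⟩
      · refine (hch _).2 ⟨u₁, u₂ - r₂, u₃ - r₃, ?_, rfl⟩
        have d2 : m ∣ u₂ - r₂ := by
          rw [hr₂]
          exact (abs_dvd _ _).mp ⟨u₂ / |m|, by rw [Int.emod_def]; ring⟩
        have d3 : m ∣ u₃ - r₃ := by
          rw [hr₃]
          exact (abs_dvd _ _).mp ⟨u₃ / |m|, by rw [Int.emod_def]; ring⟩
        exact dvd_add (Dvd.dvd.mul_left d2 α) (Dvd.dvd.mul_left d3 k)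
      · rw [nMat_mul]
        exact nMat_congr (by push_cast; ring) (by push_cast; ring) (by push_cast; ring)

end
end
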